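/- Let G be a graph, v ∈ V(G), and H ⊆ V(G) \ {v} a set hitting all θ_c minor-models of G. Then v has at most c−1 neighbors in any single connected component of G \ H; consequently if v has at most c parallel edges to each vertex of H, then deg(v) ≤ c·|H| + (c−1)·r, where r is the number of components of G \ H containing a neighbor of v. -/

import Mathlib

/-- `G` contains θ_c (two vertices joined by `c` parallel edges) as a minor. -/
def HasThetaMinor {V : Type} (G : SimpleGraph V) (c : ℕ) : Prop :=
  ∃ A B : Set V, A.Nonempty ∧ B.Nonempty ∧ Disjoint A B ∧
    (G.induce A).Connected ∧ (G.induce B).Connected ∧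
    ∃ E : Finset (V × V), E.card = c ∧ ∀ e ∈ E, e.1 ∈ A ∧ e.2 ∈ B ∧ G.Adj e.1 e.2

/-- `C` is a connected component of the subgraph of `G` induced on `W`. -/
def IsCompOf {V : Type} (G : SimpleGraph V) (W C : Set V) : Prop :=
  C ⊆ W ∧ C.Nonempty ∧ (G.induce C).Connected ∧
    ∀ C', C ⊆ C' → C' ⊆ W → (G.induce C').Connected → C' = C

open SimpleGraph Set

section Aux

variable {V : Type}

lemma walk_closure_aux {G : SimpleGraph V} {W : Set V} {u : V} (hu : u ∈ W) :
    ∀ {a b : ↥W} (_ : (G.induce W).Walk a b)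
      (ha : a.1 ∈ {w | ∃ hw : w ∈ W, (G.induce W).Reachable ⟨u, hu⟩ ⟨w, hw⟩}),
      ∃ hb : b.1 ∈ {w | ∃ hw : w ∈ W, (G.induce W).Reachable ⟨u, hu⟩ ⟨w, hw⟩},
        (G.induce {w | ∃ hw : w ∈ W, (G.induce W).Reachable ⟨u, hu⟩ ⟨w, hw⟩}).Reachable
          ⟨a.1, ha⟩ ⟨b.1, hb⟩ := by
  intro a b p
  induction p with
  | nil => exact fun ha => ⟨ha, Reachable.refl _⟩
  | @cons x y z h q ih =>
    intro ha
    obtain ⟨haW, har⟩ := ha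
    have hyC : y.1 ∈ {w | ∃ hw : w ∈ W, (G.induce W).Reachable ⟨u, hu⟩ ⟨w, hw⟩} := by
      refine ⟨y.2, har.trans ?_⟩
      have : (⟨x.1, haW⟩ : ↥W) = x := Subtype.ext rfl
      rw [this]
      exact h.reachable
    obtain ⟨hb, hr⟩ := ih hyC
    refine ⟨hb, Reachable.trans (Adj.reachable ?_) hr⟩
    exact h

lemma exists_comp_aux (G : SimpleGraph V) {W : Set V} {u : V} (hu : u ∈ W) :
    ∃ C, IsCompOf G W C ∧ u ∈ C := by
  set C : Set V := {w | ∃ hw : w ∈ W, (G.induce W).Reachable ⟨u, hu⟩ ⟨w, hw⟩} with hC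
  have huC : u ∈ C := ⟨hu, Reachable.refl _⟩
  have hsub : C ⊆ W := fun w hw => hw.1
  have hreach : ∀ w (hw : w ∈ C), (G.induce C).Reachable ⟨u, huC⟩ ⟨w, hw⟩ := by
    intro w hw
    obtain ⟨hwW, hr⟩ := hw
    obtain ⟨p⟩ := hr
    exact (walk_closure_aux hu p huC).2
  have hconn : (G.induce C).Connected := by
    have : Nonempty ↥C := ⟨⟨u, huC⟩⟩
    exact Connected.mk fun a b => (hreach a.1 a.2).symm.trans (hreach b.1 b.2)
  refine ⟨C, ⟨hsub, ⟨u, huC⟩, hconn, ?_⟩, huC⟩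
  intro C' hCC' hC'W hconn'
  refine Set.Subset.antisymm (fun w hw => ?_) hCC'
  have hr : (G.induce C').Reachable ⟨u, hCC' huC⟩ ⟨w, hw⟩ :=
    hconn'.preconnected _ _
  have := hr.map (G.induceHomOfLE hC'W).toHom
  exact ⟨hC'W hw, by convert this using 2 <;> rfl⟩

lemma part1_aux [Fintype V] (G : SimpleGraph V) (c : ℕ) (hc : 2 ≤ c) (v : V) (H : Set V)
    (hvH : v ∉ H) (hhit : ¬ HasThetaMinor (G.induce Hᶜ) c) (C : Set V)
    (hC : IsCompOf G ((H ∪ {v})ᶜ) C) :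
    (G.neighborSet v ∩ C).ncard ≤ c - 1 := by
  classical
  by_contra hlt
  push_neg at hlt
  have hcε : c ≤ (G.neighborSet v ∩ C).ncard := by omega
  obtain ⟨t, ht, htc⟩ := Set.exists_subset_card_eq hcε
  have hCprop : ∀ w ∈ C, w ∉ H ∧ w ≠ v := by
    intro w hw
    have := hC.1 hw
    simp [Set.mem_compl_iff] at this
    exact ⟨this.2, this.1⟩
  have hvHc : v ∈ Hᶜ := hvH
  have hCHc : ∀ w, w ∈ C → w ∈ Hᶜ := fun w hw => (hCprop w hw).1
  have hvC : v ∉ C := fun hv => (hCprop v hv).2 rfl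
  apply hhit
  refine ⟨{⟨v, hvHc⟩}, {w | w.1 ∈ C}, ⟨_, rfl⟩, ?_, ?_, ?_, ?_, ?_⟩
  · obtain ⟨w, hw⟩ := hC.2.1
    exact ⟨⟨w, hCHc w hw⟩, hw⟩
  · rw [Set.disjoint_left]
    rintro a rfl
    exact hvC
  · have : Nonempty ↥({⟨v, hvHc⟩} : Set ↥Hᶜ) := ⟨⟨_, rfl⟩⟩
    refine Connected.mk fun a b => ?_
    have : a = b := Subtype.ext (a.2.trans b.2.symm)
    exact this ▸ Reachable.refl _
  · have hiso : ((G.induce Hᶜ).induce {w : ↥Hᶜ | w.1 ∈ C}) ≃g G.induce C :=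
      { toFun := fun w => ⟨w.1.1, w.2⟩
        invFun := fun x => ⟨⟨x.1, hCHc _ x.2⟩, x.2⟩
        left_inv := fun _ => rfl
        right_inv := fun _ => rfl
        map_rel_iff' := Iff.rfl }
    exact hiso.connected_iff.mpr hC.2.2.1
  · refine ⟨t.toFinite.toFinset.attach.image
      (fun u => ((⟨v, hvHc⟩ : ↥Hᶜ),
        (⟨u.1, hCHc u.1 (ht (t.toFinite.mem_toFinset.mp u.2)).2⟩ : ↥Hᶜ))), ?_, ?_⟩
    · rw [Finset.card_image_of_injective _ ?_, Finset.card_attach,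
        ← Set.ncard_eq_toFinset_card _ t.toFinite, htc]
      intro u₁ u₂ he
      exact Subtype.ext (congrArg (fun p => (Prod.snd p).1) he)
    · intro e he
      simp only [Finset.mem_image] at he
      obtain ⟨u, _, rfl⟩ := he
      have hu := ht (t.toFinite.mem_toFinset.mp u.2)
      exact ⟨rfl, hu.2, hu.1⟩

lemma ncard_biUnion_le_aux {α β : Type} [Finite α] {S : Set β} (hS : S.Finite)
    (f : β → Set α) (k : ℕ) :
    (∀ b ∈ S, (f b).ncard ≤ k) → (⋃ b ∈ S, f b).ncard ≤ S.ncard * k := by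
  refine Set.Finite.induction_on
    (motive := fun S _ => (∀ b ∈ S, (f b).ncard ≤ k) →
      (⋃ b ∈ S, f b).ncard ≤ S.ncard * k) S hS (by simp) ?_
  intro a s ha hs ih hk
  rw [Set.biUnion_insert, Set.ncard_insert_of_notMem ha hs]
  calc (f a ∪ ⋃ b ∈ s, f b).ncard
      ≤ (f a).ncard + (⋃ b ∈ s, f b).ncard := Set.ncard_union_le _ _
    _ ≤ k + s.ncard * k := add_le_add (hk a (Set.mem_insert _ _))
        (ih fun b hb => hk b (Set.mem_insert_of_mem _ hb))
    _ = (s.ncard + 1) * k := by ring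

end Aux

/-- If `H` hits all θ_c minor-models of `G` and `v ∉ H`, then `v` has at most `c-1`
neighbors in each component of `G \ (H ∪ {v})`, and hence
`deg(v) ≤ c·|H| + (c-1)·r` where `r` is the number of such components containing a
neighbor of `v`. -/
theorem degree_bound_via_hitting {V : Type} [Fintype V] (G : SimpleGraph V)
    (c : ℕ) (hc : 2 ≤ c) (v : V) (H : Set V) (hvH : v ∉ H)
    (hhit : ¬ HasThetaMinor (G.induce Hᶜ) c) :
    (∀ C : Set V, IsCompOf G ((H ∪ {v})ᶜ) C →
      (G.neighborSet v ∩ C).ncard ≤ c - 1) ∧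
    (G.neighborSet v).ncard ≤ c * H.ncard + (c - 1) *
      {C : Set V | IsCompOf G ((H ∪ {v})ᶜ) C ∧ ∃ u ∈ C, G.Adj v u}.ncard := by
  have p1 : ∀ C : Set V, IsCompOf G ((H ∪ {v})ᶜ) C →
      (G.neighborSet v ∩ C).ncard ≤ c - 1 :=
    fun C hC => part1_aux G c hc v H hvH hhit C hC
  refine ⟨p1, ?_⟩
  set N := G.neighborSet v with hN
  set S := {C : Set V | IsCompOf G ((H ∪ {v})ᶜ) C ∧ ∃ u ∈ C, G.Adj v u} with hS
  have hcover : N ⊆ (N ∩ H) ∪ ⋃ C ∈ S, (N ∩ C) := by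
    intro u hu
    by_cases huH : u ∈ H
    · exact Or.inl ⟨hu, huH⟩
    · have hadj : G.Adj v u := hu
      have huW : u ∈ (H ∪ {v})ᶜ := by
        simp only [Set.mem_compl_iff, Set.mem_union, Set.mem_singleton_iff]
        push_neg
        exact ⟨huH, hadj.ne'⟩
      obtain ⟨C, hC, huC⟩ := exists_comp_aux G huW
      exact Or.inr (Set.mem_biUnion (⟨hC, u, huC, hadj⟩ : C ∈ S) ⟨hu, huC⟩)
  calc N.ncard ≤ ((N ∩ H) ∪ ⋃ C ∈ S, (N ∩ C)).ncard :=
        Set.ncard_le_ncard hcover (Set.toFinite _)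
    _ ≤ (N ∩ H).ncard + (⋃ C ∈ S, (N ∩ C)).ncard := Set.ncard_union_le _ _
    _ ≤ H.ncard + S.ncard * (c - 1) := add_le_add
        (Set.ncard_le_ncard Set.inter_subset_right (Set.toFinite _))
        (ncard_biUnion_le_aux (Set.toFinite S) _ _ (fun C hC => p1 C hC.1))
    _ ≤ c * H.ncard + (c - 1) * S.ncard := by
        have h1 : H.ncard ≤ c * H.ncard :=
          Nat.le_mul_of_pos_left _ (by omega)
        rw [mul_comm (S.ncard)]
        omega
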